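/- Let G be a finite p-group, let n, m ≥ 0, and let w_1, …, w_k be elements of the free group on the letters g_1, …, g_{n+m}. Assume that the exponent sum vectors of w_1, …, w_k, restricted to the first n coordinates, are linearly independent over 𝔽_p. Fix arbitrary elements g_{n+1}, …, g_{n+m} ∈ G. Then the substitution map G^n → G^k sending (g_1, …, g_n) to (w̄_1, …, w̄_k), where w̄_i denotes the evaluation of w_i in G, covers G^k evenly: it is surjective and every fiber has exactly |G|^{n−k} elements. -/

import Mathlib

namespace TreeWreath

def expSumVec {ι : Type*} [DecidableEq ι] (w : FreeGroup ι) : ι → ℤ :=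
  Multiplicative.toAdd
    (FreeGroup.lift (fun i => Multiplicative.ofAdd (Pi.single i (1 : ℤ))) w)

lemma lift_map {ι G H : Type*} [Group G] [Group H] (φ : G →* H) (u : ι → G) (x : FreeGroup ι) :
    φ (FreeGroup.lift u x) = FreeGroup.lift (fun i => φ (u i)) x := by
  have h : φ.comp (FreeGroup.lift u) = FreeGroup.lift (fun i => φ (u i)) :=
    FreeGroup.ext_hom _ _ (by simp)
  exact DFunLike.congr_fun h x

lemma lift_mul_central {ι G : Type*} [Group G] (u z : ι → G)
    (hz : ∀ i, z i ∈ Subgroup.center G) (x : FreeGroup ι) :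
    FreeGroup.lift (fun i => u i * z i) x
      = FreeGroup.lift u x * FreeGroup.lift z x := by
  have hcen : ∀ g : FreeGroup ι, FreeGroup.lift z g ∈ Subgroup.center G := by
    intro g
    have h : FreeGroup.lift z g
        = (Subgroup.center G).subtype
            (FreeGroup.lift (fun i => (⟨z i, hz i⟩ : Subgroup.center G)) g) := by
      rw [lift_map]; rfl
    rw [h]
    exact ((FreeGroup.lift (fun i => (⟨z i, hz i⟩ : Subgroup.center G))) g).2
  let K : FreeGroup ι →* G := MonoidHom.mk'
    (fun g => FreeGroup.lift u g * FreeGroup.lift z g) (by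
      intro a b
      have hc : Commute (FreeGroup.lift z a) (FreeGroup.lift u b) :=
        (Subgroup.mem_center_iff.mp (hcen a) _).symm
      simp only [map_mul]
      rw [hc.mul_mul_mul_comm])
  have h : FreeGroup.lift (fun i => u i * z i) = K :=
    FreeGroup.ext_hom _ _ (by intro i; simp [K])
  exact DFunLike.congr_fun h x

lemma lift_zpow_expSum {ι G : Type*} [Group G] [Fintype ι] [DecidableEq ι]
    (ζ : G) (v : ι → ℤ) (x : FreeGroup ι) :
    FreeGroup.lift (fun i => ζ ^ v i) x = ζ ^ (∑ i, v i * expSumVec x i) := by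
  let L : (ι → ℤ) →+ ℤ :=
    { toFun := fun f => ∑ i, v i * f i
      map_zero' := by simp
      map_add' := by intro f g; simp [mul_add, Finset.sum_add_distrib] }
  let H : FreeGroup ι →* G :=
    (zpowersHom G ζ).comp
      ((AddMonoidHom.toMultiplicative L).comp
        (FreeGroup.lift (fun i => Multiplicative.ofAdd (Pi.single i (1 : ℤ)))))
  have hH : (FreeGroup.lift (fun i => ζ ^ v i) : FreeGroup ι →* G) = H := by
    apply FreeGroup.ext_hom
    intro i
    simp [H, L, Pi.single_apply, mul_ite, Finset.sum_ite_eq']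
  rw [hH]
  rfl

lemma comp_append {α β : Type*} {n m : ℕ} (f : α → β) (a : Fin n → α) (b : Fin m → α) :
    f ∘ Fin.append a b = Fin.append (f ∘ a) (f ∘ b) := by
  funext i
  refine Fin.addCases (fun i => ?_) (fun i => ?_) i <;>
    simp [Fin.append_left, Fin.append_right]

lemma append_mul {G : Type*} [Group G] {n m : ℕ} (a a' : Fin n → G) (b b' : Fin m → G) :
    (fun i => Fin.append a b i * Fin.append a' b' i)
      = Fin.append (fun i => a i * a' i) (fun i => b i * b' i) := by
  funext i
  refine Fin.addCases (fun i => ?_) (fun i => ?_) i <;>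
    simp [Fin.append_left, Fin.append_right]

lemma card_mulVec_fiber (p n k : ℕ) [Fact p.Prime]
    (M : Matrix (Fin k) (Fin n) (ZMod p))
    (hM : LinearIndependent (ZMod p) (fun j => M j)) (b : Fin k → ZMod p) :
    Nat.card {z : Fin n → ZMod p // M.mulVec z = b} = p ^ (n - k) := by
  classical
  have hkn : k ≤ n := by
    simpa [Module.finrank_fin_fun] using hM.fintype_card_le_finrank
  have hinj : Function.Injective (Matrix.transpose M).mulVec := by
    rw [Matrix.mulVec_injective_iff]
    exact hM
  have hrankT : (Matrix.transpose M).rank = k := by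
    rw [Matrix.rank]
    rw [LinearMap.finrank_range_of_inj hinj, Module.finrank_fin_fun]
  have hrank : M.rank = k := by rw [← Matrix.rank_transpose, hrankT]
  have hsurj : Function.Surjective M.mulVec := by
    have htop : LinearMap.range M.mulVecLin = ⊤ := by
      apply Submodule.eq_top_of_finrank_eq
      rw [show Module.finrank (ZMod p) (LinearMap.range M.mulVecLin) = M.rank from rfl,
        hrank, Module.finrank_fin_fun]
    intro y
    obtain ⟨x, hx⟩ := LinearMap.range_eq_top.mp htop y
    exact ⟨x, hx⟩
  have hconst : ∀ b₁ b₂ : Fin k → ZMod p,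
      Nat.card {z // M.mulVec z = b₁} = Nat.card {z // M.mulVec z = b₂} := by
    intro b₁ b₂
    obtain ⟨z₁, hz₁⟩ := hsurj b₁
    obtain ⟨z₂, hz₂⟩ := hsurj b₂
    refine Nat.card_congr ⟨fun x => ⟨x.1 - z₁ + z₂, ?_⟩, fun x => ⟨x.1 - z₂ + z₁, ?_⟩, ?_, ?_⟩
    · simp [Matrix.mulVec_add, Matrix.mulVec_sub, x.2, hz₁, hz₂]
    · simp [Matrix.mulVec_add, Matrix.mulVec_sub, x.2, hz₁, hz₂]
    · intro x; ext1; simp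
    · intro x; ext1; simp
  have htot : (Fintype.card (Fin k → ZMod p)) * Nat.card {z // M.mulVec z = b}
      = p ^ n := by
    have h1 : ∑ b' : Fin k → ZMod p, Fintype.card {z // M.mulVec z = b'}
        = Fintype.card (Fin n → ZMod p) := by
      rw [← Fintype.card_sigma]
      exact Fintype.card_congr (Equiv.sigmaFiberEquiv _)
    have h2 : ∀ b' : Fin k → ZMod p,
        Fintype.card {z // M.mulVec z = b'} = Nat.card {z // M.mulVec z = b} := by
      intro b'
      rw [← Nat.card_eq_fintype_card]
      exact hconst b' b
    rw [Finset.sum_congr rfl (fun b' _ => h2 b'), Finset.sum_const, smul_eq_mul] at h1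
    simpa [ZMod.card] using h1
  have hcardk : Fintype.card (Fin k → ZMod p) = p ^ k := by simp [ZMod.card]
  rw [hcardk] at htot
  have hpk : 0 < p ^ k := pow_pos (Fact.out : p.Prime).pos k
  have hh : p ^ k * Nat.card {z // M.mulVec z = b} = p ^ k * p ^ (n - k) := by
    rw [htot, ← pow_add, Nat.add_sub_of_le hkn]
  exact Nat.eq_of_mul_eq_mul_left hpk hh

lemma count_fiber (p : ℕ) (hp : p.Prime) {n m k : ℕ}
    (w : Fin k → FreeGroup (Fin (n + m)))
    (hind : LinearIndependent (ZMod p)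
      (fun j : Fin k => fun i : Fin n => ((expSumVec (w j) (Fin.castAdd m i) : ℤ) : ZMod p))) :
    ∀ (N : ℕ) (G : Type*) [Group G] [Finite G], IsPGroup p G → Nat.card G ≤ N →
      ∀ (c : Fin m → G) (y : Fin k → G),
        Nat.card {t : Fin n → G //
            (fun j : Fin k => FreeGroup.lift (Fin.append t c) (w j)) = y}
          = Nat.card G ^ (n - k) := by
  haveI := Fact.mk hp
  intro N
  induction N with
  | zero =>
    intro G _ _ _ hle _ _
    have := Nat.card_pos (α := G)
    omega
  | succ N ih =>
    intro G _ _ hG hle c y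
    rcases subsingleton_or_nontrivial G with hS | hN
    · have h1 : Nat.card G = 1 := Nat.card_eq_one_iff_unique.mpr ⟨inferInstance, inferInstance⟩
      rw [h1, one_pow, Nat.card_eq_one_iff_unique]
      exact ⟨inferInstance, ⟨⟨fun _ => 1, Subsingleton.elim _ _⟩⟩⟩
    · classical
      -- find a central element of order p
      haveI : Nontrivial (Subgroup.center G) := hG.center_nontrivial
      haveI : Fintype (Subgroup.center G) := Fintype.ofFinite _
      obtain ⟨r, hr⟩ := (hG.to_subgroup (Subgroup.center G)).exists_card_eq
      have hdvd : p ∣ Fintype.card (Subgroup.center G) := by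
        rw [← Nat.card_eq_fintype_card]
        rcases r with _ | r
        · rw [pow_zero] at hr
          have h2 : 1 < Nat.card (Subgroup.center G) := Finite.one_lt_card
          omega
        · rw [hr]; exact dvd_pow_self p r.succ_ne_zero
      obtain ⟨ζc, hζc⟩ := exists_prime_orderOf_dvd_card p hdvd
      set ζ : G := (ζc : G) with hζdef
      have hζ : orderOf ζ = p := by
        rw [← hζc]
        exact orderOf_injective (Subgroup.center G).subtype (Subgroup.subtype_injective _) ζc
      have hζcen : ζ ∈ Subgroup.center G := ζc.2
      set Z : Subgroup G := Subgroup.zpowers ζ with hZdef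
      have hZle : Z ≤ Subgroup.center G := Subgroup.zpowers_le.mpr hζcen
      haveI hZnorm : Z.Normal := by
        constructor
        intro g hg h
        have hcomm : h * g = g * h := Subgroup.mem_center_iff.mp (hZle hg) h
        have : h * g * h⁻¹ = g := by rw [hcomm, mul_assoc, mul_inv_cancel, mul_one]
        rwa [this]
      set π := QuotientGroup.mk' Z with hπdef
      have hcardZ : Nat.card Z = p := by rw [hZdef, Nat.card_zpowers, hζ]
      have hcardG : Nat.card G = Nat.card (G ⧸ Z) * p := by
        rw [← hcardZ]; exact Subgroup.card_eq_card_quotient_mul_card_subgroup Z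
      have hQpos : 0 < Nat.card (G ⧸ Z) := Nat.card_pos
      have hQle : Nat.card (G ⧸ Z) ≤ N := by
        have h3 : Nat.card (G ⧸ Z) + Nat.card (G ⧸ Z) ≤ N + 1 := by
          calc Nat.card (G ⧸ Z) + Nat.card (G ⧸ Z) = Nat.card (G ⧸ Z) * 2 := by ring
            _ ≤ Nat.card (G ⧸ Z) * p := Nat.mul_le_mul_left _ hp.two_le
            _ = Nat.card G := hcardG.symm
            _ ≤ N + 1 := hle
        omega
      -- abbreviations
      let F : (Fin n → G) → Fin k → G := fun t j => FreeGroup.lift (Fin.append t c) (w j)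
      let Fq : (Fin n → (G ⧸ Z)) → Fin k → (G ⧸ Z) :=
        fun s j => FreeGroup.lift (Fin.append s (fun i => π (c i))) (w j)
      show Nat.card {t : Fin n → G // F t = y} = Nat.card G ^ (n - k)
      have ihQ : ∀ y' : Fin k → (G ⧸ Z), Nat.card {s : Fin n → (G ⧸ Z) // Fq s = y'}
          = Nat.card (G ⧸ Z) ^ (n - k) :=
        fun y' => ih (G ⧸ Z) (hG.to_quotient Z) hQle (fun i => π (c i)) y'
      have hFnat : ∀ t : Fin n → G, Fq (fun i => π (t i)) = fun j => π (F t j) := by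
        intro t
        funext j
        show FreeGroup.lift (Fin.append (fun i => π (t i)) (fun i => π (c i))) (w j)
          = π (FreeGroup.lift (Fin.append t c) (w j))
        rw [lift_map, show (fun i => π (Fin.append t c i))
            = Fin.append (fun i => π (t i)) (fun i => π (c i)) from ?_]
        have h4 := comp_append (⇑π) t c
        funext i
        exact congr_fun h4 i
      have hzpow_iff : ∀ a b' : ℤ, (ζ ^ a = ζ ^ b') ↔ ((a : ZMod p) = (b' : ZMod p)) := by
        intro a b'
        rw [zpow_eq_zpow_iff_modEq, hζ, ZMod.intCast_eq_intCast_iff]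
      have hzpow_val : ∀ a : ℤ, ζ ^ (((a : ZMod p)).val) = ζ ^ a := by
        intro a
        rw [← zpow_natCast, hzpow_iff]
        push_cast
        simp [ZMod.natCast_val, ZMod.cast_id]
      have hπζ : π ζ = (1 : G ⧸ Z) := by
        rw [hπdef, QuotientGroup.mk'_apply, QuotientGroup.eq_one_iff]
        exact Subgroup.mem_zpowers ζ
      haveI : Fintype G := Fintype.ofFinite G
      haveI : Fintype (G ⧸ Z) := Fintype.ofFinite _
      -- the projection of fibers
      have hmem : ∀ x : {t : Fin n → G // F t = y},
          Fq (fun i => π (x.1 i)) = fun j => π (y j) := by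
        intro x
        rw [hFnat x.1, x.2]
      let g : {t : Fin n → G // F t = y} → {s : Fin n → (G ⧸ Z) // Fq s = fun j => π (y j)} :=
        fun x => ⟨fun i => π (x.1 i), hmem x⟩
      have hcard1 : Nat.card {t : Fin n → G // F t = y}
          = ∑ s : {s : Fin n → (G ⧸ Z) // Fq s = fun j => π (y j)},
              Nat.card {x : {t : Fin n → G // F t = y} // g x = s} := by
        simp only [Nat.card_eq_fintype_card]
        rw [← Fintype.card_sigma]
        exact Fintype.card_congr (Equiv.sigmaFiberEquiv g).symm
      have hfiber : ∀ s : {s : Fin n → (G ⧸ Z) // Fq s = fun j => π (y j)},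
          Nat.card {x : {t : Fin n → G // F t = y} // g x = s} = p ^ (n - k) := by
        intro s
        have hsur := QuotientGroup.mk'_surjective Z
        choose t₀ ht₀ using fun i => hsur (s.1 i)
        have hFts : (fun j => π (F t₀ j)) = fun j => π (y j) := by
          rw [← hFnat t₀, funext ht₀, s.2]
        have hbex : ∀ j, ∃ e : ℤ, ζ ^ e = (F t₀ j)⁻¹ * y j := by
          intro j
          have h1 : π (F t₀ j) = π (y j) := congr_fun hFts j
          have h2 : (F t₀ j)⁻¹ * y j ∈ Z := by
            simp only [hπdef, QuotientGroup.mk'_apply] at h1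
            exact QuotientGroup.eq.mp h1
          exact Subgroup.mem_zpowers_iff.mp h2
        choose b hb using hbex
        let M : Matrix (Fin k) (Fin n) (ZMod p) :=
          fun j i => ((expSumVec (w j) (Fin.castAdd m i) : ℤ) : ZMod p)
        have hMli : LinearIndependent (ZMod p) (fun j => M j) := hind
        let β : Fin k → ZMod p := fun j => ((b j : ℤ) : ZMod p)
        have hcent : ∀ (v : Fin n → ℤ) (i : Fin (n + m)),
            Fin.append (fun i0 => ζ ^ v i0) (fun _ : Fin m => (1 : G)) i ∈ Subgroup.center G := by
          intro v i
          refine Fin.addCases (fun i0 => ?_) (fun i0 => ?_) i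
          · rw [Fin.append_left]; exact Subgroup.zpow_mem _ hζcen _
          · rw [Fin.append_right]; exact Subgroup.one_mem _
        have hcomp : ∀ (z : Fin n → ZMod p) (j : Fin k),
            F (fun i => t₀ i * ζ ^ (z i).val) j
              = F t₀ j * ζ ^ (∑ i : Fin n, ((z i).val : ℤ) * expSumVec (w j) (Fin.castAdd m i)) := by
          intro z j
          have h1 : Fin.append (fun i => t₀ i * ζ ^ (z i).val) c
              = fun i => Fin.append t₀ c i
                  * Fin.append (fun i0 : Fin n => ζ ^ (((z i0).val : ℤ))) (fun _ : Fin m => (1 : G)) i := by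
            funext i
            refine Fin.addCases (fun i0 => ?_) (fun i0 => ?_) i <;>
              simp only [Fin.append_left, Fin.append_right, zpow_natCast, mul_one]
          have h2 : F (fun i => t₀ i * ζ ^ (z i).val) j
              = FreeGroup.lift (Fin.append t₀ c) (w j)
                * FreeGroup.lift
                    (Fin.append (fun i0 : Fin n => ζ ^ (((z i0).val : ℤ))) (fun _ : Fin m => (1 : G))) (w j) := by
            show FreeGroup.lift (Fin.append (fun i => t₀ i * ζ ^ (z i).val) c) (w j) = _
            rw [h1]
            exact lift_mul_central _ _ (hcent fun i0 => ((z i0).val : ℤ)) (w j)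
          have h4 : Fin.append (fun i0 : Fin n => ζ ^ (((z i0).val : ℤ))) (fun _ : Fin m => (1 : G))
              = fun i => ζ ^ (Fin.append (fun i0 : Fin n => (((z i0).val : ℤ))) (fun _ : Fin m => (0 : ℤ)) i) := by
            funext i
            refine Fin.addCases (fun i0 => ?_) (fun i0 => ?_) i <;>
              simp [Fin.append_left, Fin.append_right]
          have h3 : FreeGroup.lift
              (Fin.append (fun i0 : Fin n => ζ ^ (((z i0).val : ℤ))) (fun _ : Fin m => (1 : G))) (w j)
              = ζ ^ (∑ i : Fin (n + m),
                  (Fin.append (fun i0 : Fin n => (((z i0).val : ℤ))) (fun _ : Fin m => (0 : ℤ))) i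
                    * expSumVec (w j) i) := by
            rw [h4, lift_zpow_expSum]
          have h5 : ∑ i : Fin (n + m),
              (Fin.append (fun i0 : Fin n => (((z i0).val : ℤ))) (fun _ : Fin m => (0 : ℤ))) i
                * expSumVec (w j) i
              = ∑ i : Fin n, ((z i).val : ℤ) * expSumVec (w j) (Fin.castAdd m i) := by
            rw [Fin.sum_univ_add]
            simp [Fin.append_left, Fin.append_right]
          rw [h2, h3, h5]
        have hiff : ∀ z : Fin n → ZMod p,
            (F (fun i => t₀ i * ζ ^ (z i).val) = y) ↔ M.mulVec z = β := by
          intro z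
          rw [funext_iff, funext_iff]
          refine forall_congr' fun j => ?_
          rw [hcomp z j]
          have e1 : (F t₀ j * ζ ^ (∑ i : Fin n, ((z i).val : ℤ)
              * expSumVec (w j) (Fin.castAdd m i)) = y j)
              ↔ ζ ^ (∑ i : Fin n, ((z i).val : ℤ) * expSumVec (w j) (Fin.castAdd m i))
                  = ζ ^ (b j) := by
            rw [hb j]
            exact eq_inv_mul_iff_mul_eq.symm
          rw [e1, hzpow_iff]
          have hS : ((∑ i : Fin n, ((z i).val : ℤ) * expSumVec (w j) (Fin.castAdd m i) : ℤ)
              : ZMod p) = M.mulVec z j := by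
            push_cast
            simp [Matrix.mulVec, dotProduct, M, ZMod.natCast_val, ZMod.cast_id, mul_comm]
          rw [hS]
        have hbij : Nat.card {x : {t : Fin n → G // F t = y} // g x = s}
            = Nat.card {z : Fin n → ZMod p // M.mulVec z = β} := by
          apply Nat.card_congr
          refine (Equiv.ofBijective
            (fun z : {z : Fin n → ZMod p // M.mulVec z = β} =>
              (⟨⟨fun i => t₀ i * ζ ^ ((z.1 i).val), (hiff z.1).mpr z.2⟩, ?_⟩ :
                {x : {t : Fin n → G // F t = y} // g x = s})) ⟨?_, ?_⟩).symm
          · apply Subtype.ext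
            funext i
            show π (t₀ i * ζ ^ ((z.1 i).val)) = s.1 i
            rw [map_mul, map_pow, hπζ, one_pow, mul_one, ht₀ i]
          · intro z z' h
            apply Subtype.ext
            funext i
            have h6 : t₀ i * ζ ^ ((z.1 i).val) = t₀ i * ζ ^ ((z'.1 i).val) :=
              congr_fun (congr_arg (fun x => x.1.1) h) i
            have h7 : ζ ^ (((z.1 i).val : ℤ)) = ζ ^ (((z'.1 i).val : ℤ)) := by
              rw [zpow_natCast, zpow_natCast]
              exact mul_left_cancel h6
            have h8 := (hzpow_iff _ _).mp h7
            push_cast at h8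
            simpa [ZMod.natCast_val, ZMod.cast_id] using h8
          · intro x
            have hx : ∀ i, π (x.1.1 i) = s.1 i := congr_fun (congr_arg Subtype.val x.2)
            have hmem2 : ∀ i, ∃ e : ℤ, ζ ^ e = (t₀ i)⁻¹ * x.1.1 i := by
              intro i
              have h9 : π (t₀ i) = π (x.1.1 i) := (ht₀ i).trans (hx i).symm
              simp only [hπdef, QuotientGroup.mk'_apply] at h9
              exact Subgroup.mem_zpowers_iff.mp (QuotientGroup.eq.mp h9)
            choose e he using hmem2
            have hfun : (fun i => t₀ i * ζ ^ (((e i : ℤ) : ZMod p)).val) = x.1.1 := by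
              funext i
              rw [hzpow_val, he i, mul_inv_cancel_left]
            refine ⟨⟨fun i => ((e i : ℤ) : ZMod p), (hiff _).mp ?_⟩, ?_⟩
            · rw [hfun]; exact x.1.2
            · apply Subtype.ext
              apply Subtype.ext
              exact hfun
        rw [hbij]
        exact card_mulVec_fiber p n k M hMli β
      rw [hcard1, Finset.sum_congr rfl (fun s _ => hfiber s), Finset.sum_const, smul_eq_mul,
        Finset.card_univ, ← Nat.card_eq_fintype_card, ihQ, hcardG, mul_pow]

theorem word_map_covers_evenly (p : ℕ) (hp : p.Prime)
    (G : Type*) [Group G] [Finite G] (hG : IsPGroup p G)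
    (n m k : ℕ) (w : Fin k → FreeGroup (Fin (n + m)))
    (hind : LinearIndependent (ZMod p)
      (fun j : Fin k => fun i : Fin n => ((expSumVec (w j) (Fin.castAdd m i) : ℤ) : ZMod p)))
    (c : Fin m → G) :
    Function.Surjective
        (fun t : Fin n → G => fun j : Fin k => FreeGroup.lift (Fin.append t c) (w j)) ∧
      ∀ y : Fin k → G,
        Nat.card {t : Fin n → G //
            (fun j : Fin k => FreeGroup.lift (Fin.append t c) (w j)) = y} =
          Nat.card G ^ (n - k) := by
  have hcount := count_fiber p hp w hind (Nat.card G) G hG le_rfl c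
  refine ⟨?_, hcount⟩
  intro y
  have h := hcount y
  have hpos : 0 < Nat.card {t : Fin n → G //
      (fun j : Fin k => FreeGroup.lift (Fin.append t c) (w j)) = y} := by
    rw [h]
    exact pow_pos Nat.card_pos _
  obtain ⟨⟨t, ht⟩⟩ := (Nat.card_pos_iff.mp hpos).1
  exact ⟨t, ht⟩

end TreeWreath
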